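/- If 𝒞 ⊆ 𝔽₂^{n+1} is a union ⋃_{i=0}^{⌊n/2⌋} 𝒞(n+1, n+1−2i, n−2i) of covering designs (i.e., for each i, the weight-(n+1−2i) vectors of 𝒞 cover all weight-(n−2i) vectors of 𝔽₂^{n+1} from above), then deleting the last coordinate from all vectors of 𝒞 yields a banded asymmetric covering 𝒟(n,1) of 𝔽₂ⁿ. -/
import Mathlib


/-- `C` is an asymmetric covering `𝒟(n,1)`. -/
def IsAsymCov (n : ℕ) (C : Finset (Finset (Fin n))) : Prop :=
  ∀ v : Finset (Fin n), v ∈ C ∨ ∃ u ∈ C, v ⊆ u ∧ u.card = v.card + 1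

/-- `C` is banded: every `v` of odd co-weight is covered from one level above. -/
def IsBanded (n : ℕ) (C : Finset (Finset (Fin n))) : Prop :=
  ∀ v : Finset (Fin n), Odd (n - v.card) → ∃ u ∈ C, v ⊆ u ∧ u.card = v.card + 1

private lemma card_del {n : ℕ} (s : Finset (Fin (n + 1))) :
    (Finset.univ.filter (fun j : Fin n => j.castSucc ∈ s)).card
      = (s.erase (Fin.last n)).card := by
  apply Finset.card_bij (fun j _ => Fin.castSucc j)
  · intro j hj
    simp only [Finset.mem_filter] at hj
    exact Finset.mem_erase.2 ⟨(Fin.castSucc_lt_last j).ne, hj.2⟩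
  · intro a ha b hb h
    exact Fin.castSucc_injective n h
  · intro a ha
    rw [Finset.mem_erase] at ha
    refine ⟨a.castPred ha.1, ?_, ?_⟩
    · simp [Fin.castSucc_castPred, ha.2]
    · simp [Fin.castSucc_castPred]

theorem stmt_12 (n : ℕ) (C : Finset (Finset (Fin (n + 1))))
    (hcov : ∀ i ≤ n / 2, ∀ t : Finset (Fin (n + 1)), t.card = n - 2 * i →
      ∃ s ∈ C, s.card = n + 1 - 2 * i ∧ t ⊆ s)
    (D : Finset (Finset (Fin n)))
    (hD : D = C.image (fun s => Finset.univ.filter (fun j : Fin n => j.castSucc ∈ s))) :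
    IsAsymCov n D ∧ IsBanded n D := by
  have hmain : ∀ v : Finset (Fin n), Odd (n - v.card) →
      ∃ u ∈ D, v ⊆ u ∧ u.card = v.card + 1 := by
    intro v hodd
    have hvn : v.card ≤ n := by
      simpa using Finset.card_le_univ v
    obtain ⟨i, hi⟩ := hodd
    -- n - v.card = 2*i + 1
    have hinj : Function.Injective (Fin.castSucc : Fin n → Fin (n + 1)) :=
      Fin.castSucc_injective n
    set t : Finset (Fin (n + 1)) := insert (Fin.last n) (v.image Fin.castSucc) with ht
    have hlastnot : Fin.last n ∉ v.image Fin.castSucc := by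
      simp only [Finset.mem_image]
      rintro ⟨j, -, h⟩
      exact (Fin.castSucc_lt_last j).ne h
    have htcard : t.card = v.card + 1 := by
      rw [ht, Finset.card_insert_of_notMem hlastnot, Finset.card_image_of_injective _ hinj]
    have hile : i ≤ n / 2 := by omega
    obtain ⟨s, hsC, hscard, hts⟩ := hcov i hile t (by omega)
    refine ⟨Finset.univ.filter (fun j : Fin n => j.castSucc ∈ s), ?_, ?_, ?_⟩
    · rw [hD]; exact Finset.mem_image_of_mem _ hsC
    · intro j hj
      simp only [Finset.mem_filter, Finset.mem_univ, true_and]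
      exact hts (Finset.mem_insert_of_mem (Finset.mem_image_of_mem _ hj))
    · have hlast : Fin.last n ∈ s := hts (Finset.mem_insert_self _ _)
      rw [card_del, Finset.card_erase_of_mem hlast, hscard]
      omega
  refine ⟨?_, hmain⟩
  intro v
  rcases Nat.even_or_odd (n - v.card) with heven | hodd
  · obtain ⟨i, hi⟩ := heven
    have hvn : v.card ≤ n := by simpa using Finset.card_le_univ v
    have hinj : Function.Injective (Fin.castSucc : Fin n → Fin (n + 1)) :=
      Fin.castSucc_injective n
    set t : Finset (Fin (n + 1)) := v.image Fin.castSucc with ht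
    have htcard : t.card = v.card := Finset.card_image_of_injective _ hinj
    have hile : i ≤ n / 2 := by omega
    obtain ⟨s, hsC, hscard, hts⟩ := hcov i hile t (by omega)
    have huD : Finset.univ.filter (fun j : Fin n => j.castSucc ∈ s) ∈ D := by
      rw [hD]; exact Finset.mem_image_of_mem _ hsC
    have hvu : v ⊆ Finset.univ.filter (fun j : Fin n => j.castSucc ∈ s) := by
      intro j hj
      simp only [Finset.mem_filter, Finset.mem_univ, true_and]
      exact hts (Finset.mem_image_of_mem _ hj)
    by_cases hlast : Fin.last n ∈ s
    · left
      have hcard : (Finset.univ.filter (fun j : Fin n => j.castSucc ∈ s)).card ≤ v.card := by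
        rw [card_del, Finset.card_erase_of_mem hlast, hscard]
        omega
      rwa [(Finset.eq_of_subset_of_card_le hvu hcard)]
    · right
      refine ⟨_, huD, hvu, ?_⟩
      rw [card_del, Finset.erase_eq_of_notMem hlast, hscard]
      omega
  · exact Or.inr (hmain v hodd)
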